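/- For a ∈ (-1,1) \ {0}, every real extraneous fixed point x of C_a (i.e., real solution of 22x^6 - 23(a+1)x^4 + (5a^2+16a+5)x^2 - a(a+1) = 0 that is not a root of p_a) is repelling: |C_a'(x)| > 1. In fact C_a'(x) ≥ 14/3. -/
import Mathlib

/-- Every real extraneous fixed point of `C_a`, `a ∈ (-1,1) \ {0}`, is repelling: its
multiplier `C_a'(x) = 2(3 - 12x²(2x²-(a+1))/(6x²-(a+1))²)` is at least `14/3 > 1`. -/
theorem stmt9 (a : ℝ) (ha1 : -1 < a) (ha2 : a < 1) (ha0 : a ≠ 0)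
    (x : ℝ)
    (hQ : 22 * x ^ 6 - 23 * (a + 1) * x ^ 4 + (5 * a ^ 2 + 16 * a + 5) * x ^ 2
        - a * (a + 1) = 0)
    (hp : (x ^ 2 - 1) * (x ^ 2 - a) ≠ 0) :
    14 / 3 ≤ 2 * (3 - 12 * x ^ 2 * (2 * x ^ 2 - (a + 1)) / (6 * x ^ 2 - (a + 1)) ^ 2) ∧
    1 < |2 * (3 - 12 * x ^ 2 * (2 * x ^ 2 - (a + 1)) / (6 * x ^ 2 - (a + 1)) ^ 2)| := by
  have hs : 0 < a + 1 := by linarith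
  have hd : 6 * x ^ 2 - (a + 1) ≠ 0 := by
    intro h
    have hx2 : x ^ 2 = (a + 1) / 6 := by linarith
    have hQ' : 22 * (x ^ 2) ^ 3 - 23 * (a + 1) * (x ^ 2) ^ 2
        + (5 * a ^ 2 + 16 * a + 5) * x ^ 2 - a * (a + 1) = 0 := by linear_combination hQ
    rw [hx2] at hQ'
    nlinarith [mul_pos hs (mul_pos hs hs)]
  have hd2 : 0 < (6 * x ^ 2 - (a + 1)) ^ 2 :=
    lt_of_le_of_ne (sq_nonneg _) (Ne.symm (pow_ne_zero 2 hd))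
  have hL : 12 * x ^ 2 * (2 * x ^ 2 - (a + 1)) / (6 * x ^ 2 - (a + 1)) ^ 2 ≤ 2 / 3 := by
    rw [div_le_iff₀ hd2]
    nlinarith [sq_nonneg x, mul_pos hs hs, mul_nonneg hs.le (sq_nonneg x)]
  have h1 : 14 / 3 ≤ 2 * (3 - 12 * x ^ 2 * (2 * x ^ 2 - (a + 1)) / (6 * x ^ 2 - (a + 1)) ^ 2) := by
    linarith
  refine ⟨h1, ?_⟩
  rw [abs_of_nonneg (by linarith)]
  linarith
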